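/- In G = C_{p^n} × C_{p^m} with n ≥ m ≥ 1, the number of cyclic subgroups of order p^r is p^{r-1}(p+1) if 1 ≤ r ≤ m, and p^m if m < r ≤ n. -/

import Mathlib

open Subgroup Finset

private lemma zpowers_isCyclic' {G : Type*} [Group G] (g : G) :
    IsCyclic (Subgroup.zpowers g) := by
  refine ⟨⟨g, Subgroup.mem_zpowers g⟩, ?_⟩
  rintro ⟨x, hx⟩
  obtain ⟨k, rfl⟩ := Subgroup.mem_zpowers_iff.mp hx
  exact ⟨k, Subtype.ext (by simp)⟩

private lemma fiber_count (G : Type*) [Group G] [Fintype G] (d : ℕ)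
    (f : {x : G // orderOf x = d} → {H : Subgroup G // IsCyclic H ∧ Nat.card H = d})
    (hf : ∀ x, (f x).1 = Subgroup.zpowers x.1)
    (H : {H : Subgroup G // IsCyclic H ∧ Nat.card H = d}) :
    Nat.card {x // f x = H} = Nat.totient d := by
  classical
  obtain ⟨H, hc, hcard⟩ := H
  have e : {x // f x = ⟨H, hc, hcard⟩} ≃ {y : H // orderOf y = d} :=
    { toFun := fun z => ⟨⟨(z.1 : {x : G // orderOf x = d}).1, by
        have h : Subgroup.zpowers (z.1.1 : G) = H := by
          have h2 := congrArg Subtype.val z.2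
          rw [hf] at h2
          exact h2
        simp only [← h]; exact Subgroup.mem_zpowers (z.1.1 : G)⟩, by
          rw [Subgroup.orderOf_mk]; exact z.1.2⟩
      invFun := fun y => ⟨⟨(y.1 : G), by rw [Subgroup.orderOf_coe]; exact y.2⟩, by
        apply Subtype.ext
        rw [hf]
        refine Subgroup.eq_of_le_of_card_ge (Subgroup.zpowers_le.mpr y.1.2) ?_
        rw [Nat.card_zpowers, Subgroup.orderOf_coe, y.2, hcard]⟩
      left_inv := fun z => by ext; rfl
      right_inv := fun y => by ext; rfl }
  rw [Nat.card_congr e]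
  have hd : d ∣ Fintype.card H := by
    rw [← Nat.card_eq_fintype_card, hcard]
  have h3 := IsCyclic.card_orderOf_eq_totient (α := H) hd
  rw [Nat.card_eq_fintype_card, Fintype.card_subtype]
  convert h3 using 2

private lemma count_orderOf (G : Type*) [Group G] [Fintype G] (d : ℕ) :
    Nat.card {x : G // orderOf x = d} =
      Nat.totient d * Nat.card {H : Subgroup G // IsCyclic H ∧ Nat.card H = d} := by
  classical
  set f : {x : G // orderOf x = d} → {H : Subgroup G // IsCyclic H ∧ Nat.card H = d} :=
    fun x => ⟨Subgroup.zpowers x.1, zpowers_isCyclic' x.1, by rw [Nat.card_zpowers, x.2]⟩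
      with hfdef
  have hf : ∀ x, (f x).1 = Subgroup.zpowers x.1 := fun x => rfl
  calc Nat.card {x : G // orderOf x = d}
      = Nat.card (Σ H : {H : Subgroup G // IsCyclic H ∧ Nat.card H = d}, {x // f x = H}) :=
        Nat.card_congr (Equiv.sigmaFiberEquiv f).symm
    _ = ∑ H : {H : Subgroup G // IsCyclic H ∧ Nat.card H = d}, Nat.card {x // f x = H} := by
        simp [Nat.card_eq_fintype_card, Fintype.card_sigma]
    _ = ∑ _H : {H : Subgroup G // IsCyclic H ∧ Nat.card H = d}, Nat.totient d :=
        Finset.sum_congr rfl fun H _ => fiber_count G d f hf H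
    _ = Nat.totient d * Nat.card {H : Subgroup G // IsCyclic H ∧ Nat.card H = d} := by
        simp [Nat.card_eq_fintype_card, mul_comm]

/-- In a finite cyclic group, the number of solutions of `x ^ d = 1` for `d` dividing the
order is `d`. -/
private lemma count_pow_eq_one (α : Type*) [Group α] [Fintype α] [DecidableEq α] [IsCyclic α]
    {d : ℕ} (hd0 : d ≠ 0) (hd : d ∣ Fintype.card α) :
    (Finset.univ.filter fun x : α => x ^ d = 1).card = d := by
  rw [← sum_card_orderOf_eq_card_pow_eq_one hd0]
  rw [Finset.sum_congr rfl fun m hm =>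
    IsCyclic.card_orderOf_eq_totient ((Nat.mem_divisors.mp hm).1.trans hd)]
  exact Nat.sum_totient d

private lemma count_pow_prod {G H : Type*} [Group G] [Group H] [Fintype G] [Fintype H]
    [DecidableEq G] [DecidableEq H] (d : ℕ) :
    (Finset.univ.filter fun x : G × H => x ^ d = 1).card =
      (Finset.univ.filter fun x : G => x ^ d = 1).card *
        (Finset.univ.filter fun y : H => y ^ d = 1).card := by
  rw [← Finset.card_product, ← Finset.filter_product]
  rw [← Finset.univ_product_univ]
  congr 1
  apply Finset.filter_congr
  intro x _
  simp [Prod.ext_iff]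

private lemma count_orderOf_eq_sub {G : Type*} [Group G] [Fintype G] [DecidableEq G]
    {p r : ℕ} (hp : p.Prime) (hr : 1 ≤ r) :
    (Finset.univ.filter fun x : G => orderOf x = p ^ r).card =
      (Finset.univ.filter fun x : G => x ^ p ^ r = 1).card
        - (Finset.univ.filter fun x : G => x ^ p ^ (r - 1) = 1).card := by
  have hsub : (Finset.univ.filter fun x : G => x ^ p ^ (r - 1) = 1) ⊆
      (Finset.univ.filter fun x : G => x ^ p ^ r = 1) := by
    intro x hx
    simp only [Finset.mem_filter, Finset.mem_univ, true_and,
      ← orderOf_dvd_iff_pow_eq_one] at *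
    exact hx.trans (pow_dvd_pow p (by omega))
  rw [← Finset.card_sdiff_of_subset hsub]
  congr 1
  ext x
  simp only [Finset.mem_sdiff, Finset.mem_filter, Finset.mem_univ, true_and,
    ← orderOf_dvd_iff_pow_eq_one]
  constructor
  · intro h
    refine ⟨h ▸ dvd_rfl, fun hdvd => ?_⟩
    rw [h] at hdvd
    have := (Nat.pow_dvd_pow_iff_le_right hp.one_lt).mp hdvd
    omega
  · rintro ⟨h1, h2⟩
    obtain ⟨k, hk, hko⟩ := (Nat.dvd_prime_pow hp).mp h1
    have hkr : ¬ k ≤ r - 1 := fun hle => h2 (hko ▸ pow_dvd_pow p hle)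
    have : k = r := by omega
    rw [hko, this]

private lemma count_zmod (p : ℕ) (hp : p.Prime) (N k : ℕ) [NeZero (p ^ N)] :
    (Finset.univ.filter fun x : Multiplicative (ZMod (p ^ N)) => x ^ p ^ k = 1).card
      = p ^ (min k N) := by
  classical
  have hcard : Fintype.card (Multiplicative (ZMod (p ^ N))) = p ^ N := by
    simp [ZMod.card]
  have heq : (Finset.univ.filter fun x : Multiplicative (ZMod (p ^ N)) => x ^ p ^ k = 1)
      = (Finset.univ.filter fun x : Multiplicative (ZMod (p ^ N)) => x ^ p ^ (min k N) = 1) := by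
    ext x
    simp only [Finset.mem_filter, Finset.mem_univ, true_and,
      ← orderOf_dvd_iff_pow_eq_one]
    constructor
    · intro h
      obtain ⟨j, hj, hjo⟩ := (Nat.dvd_prime_pow hp).mp h
      have hoN : orderOf x ∣ p ^ N := by
        have h0 := orderOf_dvd_card (x := x)
        rwa [hcard] at h0
      have hjN : j ≤ N := by
        rw [hjo] at hoN
        exact (Nat.pow_dvd_pow_iff_le_right hp.one_lt).mp hoN
      rw [hjo]
      exact pow_dvd_pow p (le_min hj hjN)
    · intro h
      exact h.trans (pow_dvd_pow p (min_le_left _ _))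
  rw [heq]
  exact count_pow_eq_one _ (pow_ne_zero _ hp.ne_zero)
    (by rw [hcard]; exact pow_dvd_pow p (min_le_right _ _))

/-- In `G = C_{p^n} × C_{p^m}` with `n ≥ m ≥ 1`, the number of cyclic subgroups of order
`p^r` is `p^(r-1) * (p+1)` for `1 ≤ r ≤ m`, and `p^m` for `m < r ≤ n`. -/
theorem stmt_13 (p n m : ℕ) (hp : p.Prime) (hm : 1 ≤ m) (hmn : m ≤ n) (r : ℕ) :
    (1 ≤ r → r ≤ m →
      Nat.card {H : Subgroup (Multiplicative (ZMod (p ^ n)) × Multiplicative (ZMod (p ^ m))) //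
        IsCyclic H ∧ Nat.card H = p ^ r} = p ^ (r - 1) * (p + 1)) ∧
    (m < r → r ≤ n →
      Nat.card {H : Subgroup (Multiplicative (ZMod (p ^ n)) × Multiplicative (ZMod (p ^ m))) //
        IsCyclic H ∧ Nat.card H = p ^ r} = p ^ m) := by
  classical
  haveI : NeZero (p ^ n) := ⟨pow_ne_zero _ hp.ne_zero⟩
  haveI : NeZero (p ^ m) := ⟨pow_ne_zero _ hp.ne_zero⟩
  set G := Multiplicative (ZMod (p ^ n)) × Multiplicative (ZMod (p ^ m)) with hG
  have htot : ∀ k : ℕ, (Finset.univ.filter fun x : G => x ^ p ^ k = 1).card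
      = p ^ (min k n) * p ^ (min k m) := by
    intro k
    rw [count_pow_prod, count_zmod p hp n k, count_zmod p hp m k]
  have hexact : ∀ r' : ℕ, 1 ≤ r' →
      Nat.card {x : G // orderOf x = p ^ r'} =
        p ^ (min r' n) * p ^ (min r' m) - p ^ (min (r' - 1) n) * p ^ (min (r' - 1) m) := by
    intro r' hr'
    rw [Nat.card_eq_fintype_card, Fintype.card_subtype, count_orderOf_eq_sub hp hr',
      htot, htot]
  have hkey := count_orderOf G (p ^ r)
  have htotient : 1 ≤ r → Nat.totient (p ^ r) = p ^ (r - 1) * (p - 1) :=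
    fun hr => Nat.totient_prime_pow hp hr
  have hppos : 0 < p := hp.pos
  constructor
  · intro hr hrm
    rw [hexact r hr] at hkey
    have h1 : min r n = r := min_eq_left (hrm.trans hmn)
    have h2 : min r m = r := min_eq_left hrm
    have h3 : min (r - 1) n = r - 1 := min_eq_left (by omega)
    have h4 : min (r - 1) m = r - 1 := min_eq_left (by omega)
    rw [h1, h2, h3, h4, htotient hr] at hkey
    have harith : p ^ r * p ^ r - p ^ (r - 1) * p ^ (r - 1)
        = p ^ (r - 1) * (p - 1) * (p ^ (r - 1) * (p + 1)) := by
      obtain ⟨s, rfl⟩ : ∃ s, r = s + 1 := ⟨r - 1, by omega⟩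
      obtain ⟨p', rfl⟩ : ∃ p', p = p' + 1 := ⟨p - 1, by omega⟩
      simp only [pow_succ, Nat.add_sub_cancel]
      have hring : (p' + 1) ^ s * (p' + 1) * ((p' + 1) ^ s * (p' + 1))
          = (p' + 1) ^ s * p' * ((p' + 1) ^ s * (p' + 1 + 1))
            + (p' + 1) ^ s * (p' + 1) ^ s := by ring
      exact Nat.sub_eq_of_eq_add hring
    rw [harith] at hkey
    have hpos : 0 < p ^ (r - 1) * (p - 1) := by
      have h2p : 2 ≤ p := hp.two_le
      have hpow := Nat.pow_pos (n := r - 1) hppos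
      exact Nat.mul_pos hpow (by omega)
    exact (Nat.eq_of_mul_eq_mul_left hpos hkey).symm
  · intro hmr hrn
    have hr : 1 ≤ r := by omega
    rw [hexact r hr] at hkey
    have h1 : min r n = r := min_eq_left hrn
    have h2 : min r m = m := min_eq_right (by omega)
    have h3 : min (r - 1) n = r - 1 := min_eq_left (by omega)
    have h4 : min (r - 1) m = m := min_eq_right (by omega)
    rw [h1, h2, h3, h4, htotient hr] at hkey
    have harith : p ^ r * p ^ m - p ^ (r - 1) * p ^ m
        = p ^ (r - 1) * (p - 1) * p ^ m := by
      obtain ⟨s, rfl⟩ : ∃ s, r = s + 1 := ⟨r - 1, by omega⟩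
      obtain ⟨p', rfl⟩ : ∃ p', p = p' + 1 := ⟨p - 1, by omega⟩
      simp only [pow_succ, Nat.add_sub_cancel]
      have hring : (p' + 1) ^ s * (p' + 1) * (p' + 1) ^ m
          = (p' + 1) ^ s * p' * (p' + 1) ^ m + (p' + 1) ^ s * (p' + 1) ^ m := by ring
      exact Nat.sub_eq_of_eq_add hring
    rw [harith] at hkey
    have hpos : 0 < p ^ (r - 1) * (p - 1) := by
      have h2p : 2 ≤ p := hp.two_le
      have hpow := Nat.pow_pos (n := r - 1) hppos
      exact Nat.mul_pos hpow (by omega)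
    exact (Nat.eq_of_mul_eq_mul_left hpos hkey).symm
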